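/- Let k ≥ 1, let a_1, …, a_k be pairwise relatively prime positive integers, let t ≥ 1 be an integer, and let s be an integer with C(k+t-2, k-1) ≤ s ≤ C(k+t-1, k-1) − 1. Then (k+t-1)·Π − Σ is the greatest integer having at most s representations in terms of (A_1, …, A_k); that is, g*_s(A_1, …, A_k) = (k+t-1)·Π − Σ. -/

import Mathlib

/-- The number of representations of an integer `x` as a nonnegative integral
linear combination `∑ i, m i * A i` of `A 0, …, A (k-1)`.
(Negative integers have zero representations.) -/
noncomputable def numRep {k : ℕ} (A : Fin k → ℕ) (x : ℤ) : ℕ :=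
  {m : Fin k → ℕ | (∑ i, (m i : ℤ) * (A i : ℤ)) = x}.ncard

open Finset

/-- Stars and bars for the set of tuples with given sum. -/
lemma ncard_sum_fiber (k r : ℕ) :
    {n : Fin k → ℕ | ∑ i, n i = r}.ncard = (k + r - 1).choose r := by
  classical
  have e : {n : Fin k → ℕ | ∑ i, n i = r} ≃ Sym (Fin k) r :=
    { toFun := fun n => ⟨∑ i, (n.1 i) • ({i} : Multiset (Fin k)), by
        have hc : Multiset.card (∑ i, (n.1 i) • ({i} : Multiset (Fin k)))
            = ∑ i, n.1 i := by
          rw [Multiset.card_sum]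
          simp [Multiset.card_nsmul]
        rw [hc]; exact n.2⟩
      invFun := fun s => ⟨fun i => Multiset.count i s.1, by
        show (∑ i, Multiset.count i s.1) = r
        have h := Multiset.sum_count_eq_card (s := (univ : Finset (Fin k)))
          (m := s.1) (fun a _ => mem_univ a)
        rw [h, s.2]⟩
      left_inv := fun n => by
        apply Subtype.ext; funext j
        simp [Multiset.count_sum', Multiset.count_nsmul, Multiset.count_singleton]
      right_inv := fun s => by
        apply Subtype.ext
        show ∑ i, (Multiset.count i s.1) • ({i} : Multiset (Fin k)) = s.1
        conv_rhs => rw [← Multiset.toFinset_sum_count_nsmul_eq s.1]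
        exact (Finset.sum_subset (Finset.subset_univ _)
          (fun x _ hx => by
            rw [Multiset.count_eq_zero_of_notMem (by simpa using hx), zero_smul])).symm }
  rw [← Nat.card_coe_set_eq, Nat.card_congr e, Nat.card_eq_fintype_card,
    Sym.card_sym_eq_choose, Fintype.card_fin]

section Aux

variable {k : ℕ} {a : Fin k → ℕ}

lemma hPA (ha : ∀ i, 0 < a i) (i : Fin k) : a i * ((∏ j, a j) / a i) = ∏ j, a j :=
  Nat.mul_div_cancel' (Finset.dvd_prod_of_mem a (mem_univ i))

lemma hAcop (ha : ∀ i, 0 < a i) (hcop : ∀ i j, i ≠ j → Nat.Coprime (a i) (a j))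
    (j : Fin k) : Nat.Coprime ((∏ i, a i) / a j) (a j) := by
  have h : (∏ i, a i) / a j = ∏ i ∈ univ.erase j, a i := by
    rw [← Finset.mul_prod_erase univ a (mem_univ j),
      Nat.mul_div_cancel_left _ (ha j)]
  rw [h]
  exact Nat.Coprime.prod_left (fun i hi => hcop i j (Finset.ne_of_mem_erase hi))

lemma hAdvd (ha : ∀ i, 0 < a i) (hcop : ∀ i j, i ≠ j → Nat.Coprime (a i) (a j))
    {i j : Fin k} (hij : i ≠ j) : a j ∣ (∏ l, a l) / a i := by
  have h1 : a j ∣ ((∏ l, a l) / a i) * a i := by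
    rw [Nat.div_mul_cancel (Finset.dvd_prod_of_mem a (mem_univ i))]
    exact Finset.dvd_prod_of_mem a (mem_univ j)
  exact (Nat.Coprime.dvd_of_dvd_mul_right (hcop j i (Ne.symm hij)) h1)

lemma numRep_formula (ha : ∀ i, 0 < a i)
    (hcop : ∀ i j, i ≠ j → Nat.Coprime (a i) (a j))
    (c : Fin k → ℕ) (hc : ∀ j, c j < a j) (r : ℕ) :
    numRep (fun i => (∏ j, a j) / a i)
      ((∑ i, (c i : ℤ) * (((∏ j, a j) / a i : ℕ) : ℤ)) + ((∏ j, a j : ℕ) : ℤ) * r)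
      = (k + r - 1).choose r := by
  classical
  set P : ℕ := ∏ j, a j with hP
  set A : Fin k → ℕ := fun i => P / a i with hA
  have hPpos : 0 < P := Finset.prod_pos (fun i _ => ha i)
  have hkey : ∀ n : Fin k → ℕ,
      (∑ i, ((c i + a i * n i : ℕ) : ℤ) * ((A i : ℕ) : ℤ))
        = (∑ i, (c i : ℤ) * ((A i : ℕ) : ℤ)) + ((P : ℕ) : ℤ) * ((∑ i, n i : ℕ) : ℤ) := by
    intro n
    push_cast
    rw [Finset.mul_sum, ← Finset.sum_add_distrib]
    refine Finset.sum_congr rfl fun i _ => ?_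
    have h' : (a i : ℤ) * (A i : ℤ) = (P : ℤ) := by
      exact_mod_cast congrArg (Nat.cast : ℕ → ℤ) (hPA ha i)
    push_cast
    linear_combination (n i : ℤ) * h'
  have hset : {m : Fin k → ℕ | (∑ i, (m i : ℤ) * ((A i : ℕ) : ℤ))
        = (∑ i, (c i : ℤ) * ((A i : ℕ) : ℤ)) + ((P : ℕ) : ℤ) * r}
      = (fun n : Fin k → ℕ => fun j => c j + a j * n j) ''
        {n : Fin k → ℕ | ∑ i, n i = r} := by
    ext m
    constructor
    · intro hm
      simp only [Set.mem_setOf_eq] at hm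
      have hmod : ∀ j, m j % a j = c j := by
        intro j
        haveI : NeZero (a j) := ⟨(ha j).ne'⟩
        have hcast := congrArg (fun z : ℤ => (z : ZMod (a j))) hm
        simp only [Int.cast_add, Int.cast_mul, Int.cast_sum, Int.cast_natCast] at hcast
        have hz : ∀ i, i ≠ j → ((A i : ZMod (a j))) = 0 := by
          intro i hij
          rw [ZMod.natCast_eq_zero_iff]
          exact hAdvd ha hcop hij
        have hPz : ((P : ZMod (a j))) = 0 := by
          rw [ZMod.natCast_eq_zero_iff]
          exact Finset.dvd_prod_of_mem a (mem_univ j)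
        have hL : (∑ i, (m i : ZMod (a j)) * (A i : ZMod (a j)))
            = (m j : ZMod (a j)) * (A j : ZMod (a j)) := by
          refine Finset.sum_eq_single j (fun i _ hij => by rw [hz i hij, mul_zero])
            (fun h => absurd (mem_univ j) h)
        have hR : (∑ i, (c i : ZMod (a j)) * (A i : ZMod (a j)))
            = (c j : ZMod (a j)) * (A j : ZMod (a j)) := by
          refine Finset.sum_eq_single j (fun i _ hij => by rw [hz i hij, mul_zero])
            (fun h => absurd (mem_univ j) h)
        rw [hL, hR, hPz, zero_mul, add_zero] at hcast
        have hinv := ZMod.coe_mul_inv_eq_one (A j) (hAcop ha hcop j)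
        have : (m j : ZMod (a j)) = (c j : ZMod (a j)) := by
          have := congrArg (fun z => z * ((A j : ZMod (a j)))⁻¹) hcast
          simpa [mul_assoc, hinv] using this
        have := (ZMod.natCast_eq_natCast_iff' _ _ _).mp this
        rwa [Nat.mod_eq_of_lt (hc j)] at this
      refine ⟨fun j => m j / a j, ?_, ?_⟩
      · have hmrepr : ∀ j, m j = c j + a j * (m j / a j) := by
          intro j
          conv_lhs => rw [← Nat.mod_add_div (m j) (a j), hmod j]
        have h2 : (∑ i, (m i : ℤ) * ((A i : ℕ) : ℤ))
            = (∑ i, (c i : ℤ) * ((A i : ℕ) : ℤ))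
              + ((P : ℕ) : ℤ) * ((∑ i, m i / a i : ℕ) : ℤ) := by
          rw [← hkey]
          refine Finset.sum_congr rfl fun i _ => ?_
          rw [← hmrepr i]
        rw [h2] at hm
        have : ((∑ i, m i / a i : ℕ) : ℤ) = (r : ℤ) := by
          have hP0 : ((P : ℕ) : ℤ) ≠ 0 := by exact_mod_cast hPpos.ne'
          exact mul_left_cancel₀ hP0 (by linarith)
        exact_mod_cast this
      · funext j
        exact (by
          conv_rhs => rw [← Nat.mod_add_div (m j) (a j), hmod j]
          : (fun j => c j + a j * (m j / a j)) j = m j)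
    · rintro ⟨n, hn, rfl⟩
      simp only [Set.mem_setOf_eq] at hn ⊢
      have := hkey n
      rw [hn] at this
      exact this
  have hinj : Function.Injective (fun n : Fin k → ℕ => fun j => c j + a j * n j) := by
    intro n n' h
    funext j
    have := congrFun h j
    simp only at this
    exact Nat.eq_of_mul_eq_mul_left (ha j) (by omega)
  show ({m : Fin k → ℕ | (∑ i, (m i : ℤ) * ((A i : ℕ) : ℤ))
        = (∑ i, (c i : ℤ) * ((A i : ℕ) : ℤ)) + ((P : ℕ) : ℤ) * r}).ncard
      = (k + r - 1).choose r
  rw [hset, Set.ncard_image_of_injective _ hinj, ncard_sum_fiber]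

lemma exists_res (ha : ∀ i, 0 < a i)
    (hcop : ∀ i j, i ≠ j → Nat.Coprime (a i) (a j)) (x : ℤ) :
    ∃ c : Fin k → ℕ, (∀ j, c j < a j) ∧
      ((∏ j, a j : ℕ) : ℤ) ∣ (x - ∑ i, (c i : ℤ) * (((∏ j, a j) / a i : ℕ) : ℤ)) := by
  classical
  set P : ℕ := ∏ j, a j with hP
  set A : Fin k → ℕ := fun i => P / a i with hA
  haveI : ∀ j : Fin k, NeZero (a j) := fun j => ⟨(ha j).ne'⟩
  refine ⟨fun j => ((x : ZMod (a j)) * ((A j : ZMod (a j)))⁻¹).val,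
    fun j => ZMod.val_lt _, ?_⟩
  have hcast : ((P : ℕ) : ℤ) = ∏ j, ((a j : ℤ)) := Nat.cast_prod a univ
  rw [hcast]
  refine Finset.prod_dvd_of_coprime ?_ ?_
  · intro i _ j _ hij
    exact (Nat.isCoprime_iff_coprime).mpr (hcop i j hij)
  · intro j _
    rw [← ZMod.intCast_zmod_eq_zero_iff_dvd]
    have hz : ∀ i, i ≠ j → ((A i : ZMod (a j))) = 0 := by
      intro i hij
      rw [ZMod.natCast_eq_zero_iff]
      exact hAdvd ha hcop hij
    have hsum : (∑ i, ((((x : ZMod (a i)) * ((A i : ZMod (a i)))⁻¹).val : ZMod (a j)))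
          * (A i : ZMod (a j)))
        = (((x : ZMod (a j)) * ((A j : ZMod (a j)))⁻¹).val : ZMod (a j))
          * (A j : ZMod (a j)) := by
      refine Finset.sum_eq_single j (fun i _ hij => by rw [hz i hij, mul_zero])
        (fun h => absurd (mem_univ j) h)
    have hinv := ZMod.coe_mul_inv_eq_one (A j) (hAcop ha hcop j)
    rw [Int.cast_sub, sub_eq_zero]
    simp only [Int.cast_sum, Int.cast_mul, Int.cast_natCast]
    rw [hsum, ZMod.natCast_zmod_val, mul_assoc, mul_comm ((A j : ZMod (a j)))⁻¹,
      hinv, mul_one]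

end Aux

/-- For `C(k+t-2, k-1) ≤ s ≤ C(k+t-1, k-1) − 1`, the number `(k+t-1)·Π − Σ` is
the greatest integer with at most `s` representations in terms of `(A₁, …, A_k)`. -/
theorem stmt3 (k t : ℕ) (hk : 1 ≤ k) (ht : 1 ≤ t)
    (a : Fin k → ℕ) (ha : ∀ i, 0 < a i)
    (hcop : ∀ i j, i ≠ j → Nat.Coprime (a i) (a j))
    (s : ℕ) (hs₁ : Nat.choose (k + t - 2) (k - 1) ≤ s)
    (hs₂ : s ≤ Nat.choose (k + t - 1) (k - 1) - 1) :
    IsGreatest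
      {x : ℤ | numRep (fun i => (∏ j, a j) / a i) x ≤ s}
      (((k : ℤ) + (t : ℤ) - 1) * ((∏ j, a j : ℕ) : ℤ)
        - ((∑ i, (∏ j, a j) / a i : ℕ) : ℤ)) := by
  classical
  set P : ℕ := ∏ j, a j with hP
  set A : Fin k → ℕ := fun i => P / a i with hA
  have hPpos : 0 < P := Finset.prod_pos (fun i _ => ha i)
  have hPAZ : ∀ i, (a i : ℤ) * (A i : ℤ) = (P : ℤ) := fun i => by
    exact_mod_cast congrArg (Nat.cast : ℕ → ℤ) (hPA ha i)
  have hSigCast : ((∑ i, A i : ℕ) : ℤ) = ∑ i, (A i : ℤ) := Nat.cast_sum univ A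
  -- the value Σ (a i - 1) A i
  have hsum_max : (∑ i, (((a i - 1 : ℕ)) : ℤ) * (A i : ℤ))
      = (k : ℤ) * (P : ℤ) - ∑ i, (A i : ℤ) := by
    have : ∀ i : Fin k, (((a i - 1 : ℕ)) : ℤ) * (A i : ℤ)
        = (P : ℤ) - (A i : ℤ) := by
      intro i
      have h1 : (((a i - 1 : ℕ)) : ℤ) = (a i : ℤ) - 1 := by
        have := ha i; omega
      rw [h1, sub_mul, one_mul, hPAZ i]
    rw [Finset.sum_congr rfl (fun i _ => this i), Finset.sum_sub_distrib,
      Finset.sum_const, Finset.card_univ, Fintype.card_fin, nsmul_eq_mul]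
  have hxstar : (((k : ℤ) + (t : ℤ) - 1) * (P : ℤ) - ((∑ i, A i : ℕ) : ℤ))
      = (∑ i, (((a i - 1 : ℕ)) : ℤ) * (A i : ℤ)) + ((P : ℕ) : ℤ) * ((t - 1 : ℕ) : ℤ) := by
    rw [hsum_max, hSigCast]
    have h1 : ((t - 1 : ℕ) : ℤ) = (t : ℤ) - 1 := by omega
    rw [h1]; ring
  constructor
  · -- membership
    show numRep A (((k : ℤ) + (t : ℤ) - 1) * (P : ℤ) - ((∑ i, A i : ℕ) : ℤ)) ≤ s
    rw [hxstar]
    have := numRep_formula (a := a) ha hcop (fun i => a i - 1)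
      (fun j => Nat.sub_lt (ha j) one_pos) (t - 1)
    rw [this]
    have h2 : (k + (t - 1) - 1).choose (t - 1) = (k + t - 2).choose (k - 1) := by
      have h3 : k + (t - 1) - 1 = k + t - 2 := by omega
      rw [h3, ← Nat.choose_symm (by omega : t - 1 ≤ k + t - 2)]
      congr 1
      omega
    rw [h2]
    exact hs₁
  · -- upper bound
    rintro x hx
    simp only [Set.mem_setOf_eq] at hx
    by_contra hlt
    push_neg at hlt
    obtain ⟨c, hc, r, hr⟩ := exists_res (a := a) ha hcop x
    -- Σ c A ≤ k P - Σ A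
    have hcA_le : (∑ i, (c i : ℤ) * (A i : ℤ)) ≤ (k : ℤ) * (P : ℤ) - ∑ i, (A i : ℤ) := by
      rw [← hsum_max]
      refine Finset.sum_le_sum (fun i _ => ?_)
      have h1 : (c i : ℤ) ≤ ((a i - 1 : ℕ) : ℤ) := by
        have := hc i; omega
      exact mul_le_mul_of_nonneg_right h1 (by positivity)
    have hPr : ((t : ℤ) - 1) * (P : ℤ) < ((P : ℕ) : ℤ) * r := by
      rw [← hr]
      have : (((k : ℤ) + (t : ℤ) - 1) * (P : ℤ) - ((∑ i, A i : ℕ) : ℤ)) < x := hlt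
      rw [hSigCast] at this
      linarith
    have hPZ : (0 : ℤ) < ((P : ℕ) : ℤ) := by exact_mod_cast hPpos
    have hrt : (t : ℤ) ≤ r := by
      nlinarith [hPr, hPZ]
    set r' : ℕ := r.toNat with hr'
    have hr'eq : (r' : ℤ) = r := Int.toNat_of_nonneg (by omega)
    have hr2 : x - (∑ i, (c i : ℤ) * (A i : ℤ)) = ((P : ℕ) : ℤ) * r := hr
    have hxeq : x = (∑ i, (c i : ℤ) * (A i : ℤ)) + ((P : ℕ) : ℤ) * (r' : ℤ) := by
      rw [hr'eq]; linarith
    have hform := numRep_formula (a := a) ha hcop c hc r'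
    have hnum : numRep A x = (k + r' - 1).choose r' := by
      rw [hxeq]; exact hform
    have hrt' : t ≤ r' := by omega
    have hmono : (k + t - 1).choose (k - 1) ≤ (k + r' - 1).choose (k - 1) :=
      Nat.choose_le_choose _ (by omega)
    have hsym : (k + r' - 1).choose r' = (k + r' - 1).choose (k - 1) := by
      rw [← Nat.choose_symm (by omega : r' ≤ k + r' - 1)]
      congr 1
      omega
    have hpos : 0 < (k + t - 1).choose (k - 1) :=
      Nat.choose_pos (by omega)
    omega
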